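/- arXiv:1904.13290 — 3 statements merged into one kernel-verified Lean document; each statement's English description precedes it below -/
import Mathlib

section
/- The partial derivative ∂Y_i/∂s_j of the function Y_i(s) = (∫ f₀ p_i² (Σ_k s_k p_k²)^{-1/2} d³p)/(∫ f₀ (Σ_k s_k p_k²)^{1/2} d³p) is strictly negative for every i, j and every s in the open simplex, provided f₀ ≥ 0 is not a.e. zero. -/
open MeasureTheory

/-- The functional `Y_i(s)` of the normalized metric variables. -/
noncomputable def Yfun (f₀ : EuclideanSpace ℝ (Fin 3) → ℝ) (i : Fin 3) (s : Fin 3 → ℝ) : ℝ :=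
  (∫ p : EuclideanSpace ℝ (Fin 3),
      f₀ p * (p i) ^ 2 * (∑ k, s k * (p k) ^ 2) ^ (-(1 : ℝ) / 2)) /
  (∫ p : EuclideanSpace ℝ (Fin 3),
      f₀ p * (∑ k, s k * (p k) ^ 2) ^ ((1 : ℝ) / 2))

namespace YAux

open Metric
open scoped ENNReal

local notation "E₃" => EuclideanSpace ℝ (Fin 3)

lemma sum_sq (p : E₃) : ∑ k, p k ^ 2 = ‖p‖ ^ (2:ℝ) := by
  have h1 : ‖p‖ ^ (2:ℝ) = ‖p‖ ^ (2:ℕ) := by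
    rw [← Real.rpow_natCast ‖p‖ 2]; norm_num
  rw [h1, EuclideanSpace.norm_eq, Real.sq_sqrt (by positivity)]
  simp [Real.norm_eq_abs, sq_abs]

lemma sq_coord_le (p : E₃) (i : Fin 3) : p i ^ 2 ≤ ‖p‖ ^ (2:ℝ) := by
  rw [← sum_sq]
  exact Finset.single_le_sum (f := fun k => p k ^ 2) (fun k _ => sq_nonneg _) (Finset.mem_univ i)

lemma meas_coord (k : Fin 3) : Measurable fun p : E₃ => p k :=
  (EuclideanSpace.proj (𝕜 := ℝ) k).continuous.measurable

lemma meas_Q (s : Fin 3 → ℝ) : Measurable fun p : E₃ => ∑ k, s k * p k ^ 2 := by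
  apply Finset.measurable_sum
  intro k _
  exact (((meas_coord k).pow_const 2).const_mul (s k))

lemma meas_rpow {α : Type*} [MeasurableSpace α] {f : α → ℝ} (hf : Measurable f) (r : ℝ) :
    Measurable fun x => f x ^ r := by
  measurability

lemma Q_nonneg {s : Fin 3 → ℝ} (hs : ∀ k, 0 < s k) (p : E₃) :
    0 ≤ ∑ k, s k * p k ^ 2 :=
  Finset.sum_nonneg fun k _ => mul_nonneg (hs k).le (sq_nonneg _)

lemma Q_lower {m : ℝ} {s' : Fin 3 → ℝ} (h : ∀ k, m ≤ s' k) (p : E₃) :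
    m * ‖p‖ ^ (2:ℝ) ≤ ∑ k, s' k * p k ^ 2 := by
  rw [← sum_sq, Finset.mul_sum]
  exact Finset.sum_le_sum fun k _ => mul_le_mul_of_nonneg_right (h k) (sq_nonneg _)

lemma Q_upper {M : ℝ} {s' : Fin 3 → ℝ} (h : ∀ k, s' k ≤ M) (p : E₃) :
    ∑ k, s' k * p k ^ 2 ≤ M * ‖p‖ ^ (2:ℝ) := by
  rw [← sum_sq, Finset.mul_sum]
  exact Finset.sum_le_sum fun k _ => mul_le_mul_of_nonneg_right (h k) (sq_nonneg _)

lemma Q_pos {s : Fin 3 → ℝ} (hs : ∀ k, 0 < s k) {p : E₃} (hp : p ≠ 0) :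
    0 < ∑ k, s k * p k ^ 2 := by
  obtain ⟨k, hk⟩ : ∃ k, p k ≠ 0 := by
    by_contra h
    push_neg at h
    exact hp (by ext k; exact h k)
  refine Finset.sum_pos' (fun k _ => mul_nonneg (hs k).le (sq_nonneg _)) ⟨k, Finset.mem_univ k, ?_⟩
  exact mul_pos (hs k) (by positivity)

lemma Qrpow_le_neg {m : ℝ} (hm : 0 < m) {s' : Fin 3 → ℝ} (h : ∀ k, m ≤ s' k) {t : ℝ}
    (ht : t ≤ 0) {p : E₃} (hp : p ≠ 0) :
    (∑ k, s' k * p k ^ 2) ^ t ≤ m ^ t * ‖p‖ ^ (2*t) := by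
  have hnp : (0:ℝ) < ‖p‖ := norm_pos_iff.2 hp
  have h1 : (0:ℝ) < m * ‖p‖ ^ (2:ℝ) := by positivity
  calc (∑ k, s' k * p k ^ 2) ^ t ≤ (m * ‖p‖ ^ (2:ℝ)) ^ t :=
        Real.rpow_le_rpow_of_nonpos h1 (Q_lower h p) ht
    _ = m ^ t * ‖p‖ ^ (2*t) := by
        rw [Real.mul_rpow hm.le (by positivity), ← Real.rpow_mul (norm_nonneg p)]

lemma Qrpow_le_pos {M : ℝ} (hM : 0 < M) {s' : Fin 3 → ℝ} (hs : ∀ k, 0 < s' k)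
    (h : ∀ k, s' k ≤ M) {t : ℝ} (ht : 0 ≤ t) (p : E₃) :
    (∑ k, s' k * p k ^ 2) ^ t ≤ M ^ t * ‖p‖ ^ (2*t) := by
  calc (∑ k, s' k * p k ^ 2) ^ t ≤ (M * ‖p‖ ^ (2:ℝ)) ^ t :=
        Real.rpow_le_rpow (Q_nonneg hs p) (Q_upper h p) ht
    _ = M ^ t * ‖p‖ ^ (2*t) := by
        rw [Real.mul_rpow hM.le (by positivity), ← Real.rpow_mul (norm_nonneg p)]

/-- The linear map `v ↦ ∑ k, v k * p k ^ 2`. -/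
noncomputable def L (p : E₃) : (Fin 3 → ℝ) →L[ℝ] ℝ :=
  ∑ k, (p k ^ 2) • ContinuousLinearMap.proj k

lemma L_apply (p : E₃) (v : Fin 3 → ℝ) : L p v = ∑ k, v k * p k ^ 2 := by
  simp [L, mul_comm]

lemma L_single (p : E₃) (j : Fin 3) : L p (Pi.single j 1) = p j ^ 2 := by
  rw [L_apply]
  simp [Pi.single_apply]

lemma L_norm (p : E₃) : ‖L p‖ ≤ ‖p‖ ^ (2:ℝ) := by
  refine ContinuousLinearMap.opNorm_le_bound _ (by positivity) fun v => ?_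
  rw [L_apply, Real.norm_eq_abs]
  calc |∑ k, v k * p k ^ 2| ≤ ∑ k, |v k * p k ^ 2| := Finset.abs_sum_le_sum_abs _ _
    _ ≤ ∑ k, ‖v‖ * p k ^ 2 := by
        refine Finset.sum_le_sum fun k _ => ?_
        rw [abs_mul, abs_of_nonneg (sq_nonneg (p k))]
        exact mul_le_mul_of_nonneg_right (by simpa using norm_le_pi_norm v k) (sq_nonneg _)
    _ = (∑ k, p k ^ 2) * ‖v‖ := by
        rw [Finset.sum_mul]
        exact Finset.sum_congr rfl fun k _ => mul_comm _ _
    _ = ‖p‖ ^ (2:ℝ) * ‖v‖ := by rw [sum_sq]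

lemma L_cont : Continuous fun p : E₃ => L p := by
  unfold L
  refine continuous_finset_sum _ fun k _ => ?_
  exact (((EuclideanSpace.proj (𝕜 := ℝ) k).continuous.pow 2)).smul continuous_const

lemma ae_ne_zero : ∀ᵐ p : E₃, p ≠ 0 := by
  have h : volume ({(0:E₃)} : Set E₃) = 0 := measure_singleton 0
  rw [ae_iff]
  simpa using h

/-- Integrability of the basic integrands. -/
lemma integrableF (f₀ : E₃ → ℝ) (hmeas : Measurable f₀) (hnn : ∀ p, 0 ≤ f₀ p)
    (hint : Integrable fun p : E₃ => f₀ p * ‖p‖)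
    (w : E₃ → ℝ) (hwm : Measurable w) (hw0 : ∀ p, 0 ≤ w p) (r : ℝ)
    (hwle : ∀ p : E₃, p ≠ 0 → w p ≤ ‖p‖ ^ (1 - 2*r))
    (s : Fin 3 → ℝ) (hs : ∀ k, 0 < s k) :
    Integrable fun p : E₃ => f₀ p * (w p * (∑ k, s k * p k ^ 2) ^ r) := by
  set m : ℝ := min (s 0) (min (s 1) (s 2)) with hmdef
  have hm : 0 < m := lt_min (hs 0) (lt_min (hs 1) (hs 2))
  have hms : ∀ k, m ≤ s k := by
    intro k
    fin_cases k
    · exact min_le_left _ _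
    · exact (min_le_right _ _).trans (min_le_left _ _)
    · exact (min_le_right _ _).trans (min_le_right _ _)
  set M : ℝ := max (s 0) (max (s 1) (s 2)) with hMdef
  have hM0 : 0 < M := lt_of_lt_of_le (hs 0) (le_max_left _ _)
  have hMs : ∀ k, s k ≤ M := by
    intro k
    fin_cases k
    · exact le_max_left _ _
    · exact (le_max_left _ _).trans (le_max_right _ _)
    · exact (le_max_right _ _).trans (le_max_right _ _)
  obtain ⟨C, hC0, hC⟩ : ∃ C : ℝ, 0 ≤ C ∧
      ∀ p : E₃, p ≠ 0 → (∑ k, s k * p k ^ 2) ^ r ≤ C * ‖p‖ ^ (2*r) := by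
    rcases le_or_gt r 0 with h | h
    · exact ⟨m ^ r, (Real.rpow_nonneg hm.le r), fun p hp => Qrpow_le_neg hm hms h hp⟩
    · exact ⟨M ^ r, (Real.rpow_nonneg hM0.le r), fun p _ => Qrpow_le_pos hM0 hs hMs h.le p⟩
  refine (hint.const_mul C).mono'
    ((hmeas.mul (hwm.mul (meas_rpow (meas_Q s) r))).aestronglyMeasurable) ?_
  filter_upwards [ae_ne_zero] with p hp
  have hnp : (0:ℝ) < ‖p‖ := norm_pos_iff.2 hp
  have hQ0 : 0 ≤ ∑ k, s k * p k ^ 2 := Q_nonneg hs p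
  have hQr0 : 0 ≤ (∑ k, s k * p k ^ 2) ^ r := Real.rpow_nonneg hQ0 r
  have hkey : w p * (∑ k, s k * p k ^ 2) ^ r ≤ C * ‖p‖ := by
    calc w p * (∑ k, s k * p k ^ 2) ^ r
        ≤ ‖p‖ ^ (1 - 2*r) * (C * ‖p‖ ^ (2*r)) :=
          mul_le_mul (hwle p hp) (hC p hp) hQr0 (Real.rpow_nonneg (norm_nonneg p) _)
      _ = C * (‖p‖ ^ (1 - 2*r) * ‖p‖ ^ (2*r)) := by ring
      _ = C * ‖p‖ := by
          rw [← Real.rpow_add hnp, show (1 - 2*r) + 2*r = (1:ℝ) by ring, Real.rpow_one]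
  rw [Real.norm_eq_abs, abs_of_nonneg (mul_nonneg (hnn p) (mul_nonneg (hw0 p) hQr0))]
  calc f₀ p * (w p * (∑ k, s k * p k ^ 2) ^ r) ≤ f₀ p * (C * ‖p‖) :=
        mul_le_mul_of_nonneg_left hkey (hnn p)
    _ = C * (f₀ p * ‖p‖) := by ring

/-- Positivity of the basic integrals. -/
lemma int_pos (f₀ : E₃ → ℝ) (hnn : ∀ p, 0 ≤ f₀ p)
    (hne : ¬ (∀ᵐ p : E₃, f₀ p = 0))
    (g : E₃ → ℝ) (hg0 : ∀ p, 0 ≤ g p)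
    (hgpos : ∀ p : E₃, (∀ k, p k ≠ 0) → 0 < g p)
    (hgi : Integrable fun p : E₃ => f₀ p * g p) :
    0 < ∫ p : E₃, f₀ p * g p := by
  rw [integral_pos_iff_support_of_nonneg_ae
    (Filter.Eventually.of_forall fun p => mul_nonneg (hnn p) (hg0 p)) hgi]
  have hZ : volume (⋃ k : Fin 3, {p : E₃ | p k = 0}) = 0 := by
    refine measure_iUnion_null fun k => ?_
    have hker : {p : E₃ | p k = 0}
        = (LinearMap.ker (EuclideanSpace.projₗ (𝕜 := ℝ) (ι := Fin 3) k) : Set E₃) := by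
      ext p; simp [LinearMap.mem_ker]
    rw [hker]
    refine Measure.addHaar_submodule _ _ ?_
    intro h
    have h1 : EuclideanSpace.single k (1:ℝ) ∈
        LinearMap.ker (EuclideanSpace.projₗ (𝕜 := ℝ) (ι := Fin 3) k) := by
      rw [h]; trivial
    simp [LinearMap.mem_ker] at h1
  have hsupp : 0 < volume (Function.support f₀) := by
    rw [pos_iff_ne_zero]
    intro h
    exact hne (by rw [ae_iff]; simpa [Function.support] using h)
  have hsub : Function.support f₀ \ (⋃ k : Fin 3, {p : E₃ | p k = 0})
      ⊆ Function.support fun p => f₀ p * g p := by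
    intro p hp
    obtain ⟨hp1, hp2⟩ := hp
    have hcoord : ∀ k, p k ≠ 0 := by
      intro k hk
      exact hp2 (Set.mem_iUnion.2 ⟨k, hk⟩)
    exact mul_ne_zero hp1 (hgpos p hcoord).ne'
  calc (0:ℝ≥0∞) < volume (Function.support f₀) := hsupp
    _ = volume (Function.support f₀ \ (⋃ k : Fin 3, {p : E₃ | p k = 0})) :=
        (measure_diff_null hZ).symm
    _ ≤ volume (Function.support fun p => f₀ p * g p) := measure_mono hsub

/-- The main parametric differentiation lemma. -/
lemma key (f₀ : E₃ → ℝ) (hmeas : Measurable f₀) (hnn : ∀ p, 0 ≤ f₀ p)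
    (hint : Integrable fun p : E₃ => f₀ p * ‖p‖)
    (w : E₃ → ℝ) (hwm : Measurable w) (hw0 : ∀ p, 0 ≤ w p) (r : ℝ) (hr1 : r ≤ 1)
    (hwle : ∀ p : E₃, p ≠ 0 → w p ≤ ‖p‖ ^ (1 - 2*r))
    (s : Fin 3 → ℝ) (hs : ∀ k, 0 < s k) :
    HasFDerivAt (fun s' : Fin 3 → ℝ => ∫ p : E₃, f₀ p * w p * (∑ k, s' k * p k ^ 2) ^ r)
      (∫ p : E₃, (f₀ p * w p * (r * (∑ k, s k * p k ^ 2) ^ (r-1))) • L p) s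
    ∧ Integrable (fun p : E₃ => (f₀ p * w p * (r * (∑ k, s k * p k ^ 2) ^ (r-1))) • L p) := by
  set m : ℝ := min (s 0) (min (s 1) (s 2)) with hmdef
  have hm : 0 < m := lt_min (hs 0) (lt_min (hs 1) (hs 2))
  have hms : ∀ k, m ≤ s k := by
    intro k
    fin_cases k
    · exact min_le_left _ _
    · exact (min_le_right _ _).trans (min_le_left _ _)
    · exact (min_le_right _ _).trans (min_le_right _ _)
  have hε : (0:ℝ) < m/2 := by linarith
  have hball : ∀ s' ∈ ball s (m/2), ∀ k, m/2 ≤ s' k := by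
    intro s' hs' k
    have h1 : |s' k - s k| ≤ ‖s' - s‖ := by
      simpa [Real.norm_eq_abs] using norm_le_pi_norm (s' - s) k
    rw [mem_ball, dist_eq_norm] at hs'
    have h2 := abs_lt.1 (lt_of_le_of_lt h1 hs')
    have := hms k
    linarith [h2.1]
  set F' : (Fin 3 → ℝ) → E₃ → ((Fin 3 → ℝ) →L[ℝ] ℝ) :=
    fun s' p => (f₀ p * w p * (r * (∑ k, s' k * p k ^ 2) ^ (r-1))) • L p with hF'def
  set bound : E₃ → ℝ := fun p => (|r| * (m/2) ^ (r-1)) * (f₀ p * ‖p‖) with hbounddef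
  have h_bound : ∀ᵐ p : E₃, ∀ s' ∈ ball s (m/2), ‖F' s' p‖ ≤ bound p := by
    filter_upwards [ae_ne_zero] with p hp
    intro s' hs'
    have hnp : (0:ℝ) < ‖p‖ := norm_pos_iff.2 hp
    have hQr1 : (∑ k, s' k * p k ^ 2) ^ (r-1) ≤ (m/2) ^ (r-1) * ‖p‖ ^ (2*(r-1)) :=
      Qrpow_le_neg hε (hball s' hs') (by linarith) hp
    have hQ0' : 0 ≤ ∑ k, s' k * p k ^ 2 :=
      Q_nonneg (fun k => lt_of_lt_of_le hε (hball s' hs' k)) p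
    have hQr10 : 0 ≤ (∑ k, s' k * p k ^ 2) ^ (r-1) := Real.rpow_nonneg hQ0' _
    have hstep1 : ‖F' s' p‖ ≤ (f₀ p * w p * (|r| * (∑ k, s' k * p k ^ 2) ^ (r-1))) * ‖p‖ ^ (2:ℝ) := by
      simp only [hF'def]
      refine (norm_smul_le (f₀ p * w p * (r * (∑ k, s' k * p k ^ 2) ^ (r-1))) (L p)).trans ?_
      rw [Real.norm_eq_abs, abs_mul, abs_mul,
        abs_of_nonneg (hnn p), abs_of_nonneg (hw0 p), abs_mul, abs_of_nonneg hQr10]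
      exact mul_le_mul_of_nonneg_left (L_norm p)
        (mul_nonneg (mul_nonneg (hnn p) (hw0 p)) (mul_nonneg (abs_nonneg r) hQr10))
    have hppow : ‖p‖ ^ (1 - 2*r) * ‖p‖ ^ (2*(r-1)) * ‖p‖ ^ ((2:ℝ)) = ‖p‖ := by
      rw [← Real.rpow_add hnp, ← Real.rpow_add hnp,
        show (1 - 2*r) + 2*(r-1) + 2 = (1:ℝ) by ring, Real.rpow_one]
    calc ‖F' s' p‖ ≤ (f₀ p * w p * (|r| * (∑ k, s' k * p k ^ 2) ^ (r-1))) * ‖p‖ ^ (2:ℝ) := hstep1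
      _ ≤ (f₀ p * (‖p‖ ^ (1 - 2*r)) * (|r| * ((m/2) ^ (r-1) * ‖p‖ ^ (2*(r-1))))) * ‖p‖ ^ (2:ℝ) := by
          refine mul_le_mul_of_nonneg_right ?_ (Real.rpow_nonneg (norm_nonneg p) _)
          refine mul_le_mul ?_ ?_ (mul_nonneg (abs_nonneg r) hQr10)
            (mul_nonneg (hnn p) (Real.rpow_nonneg (norm_nonneg p) _))
          · exact mul_le_mul_of_nonneg_left (hwle p hp) (hnn p)
          · exact mul_le_mul_of_nonneg_left hQr1 (abs_nonneg r)
      _ = (|r| * (m/2) ^ (r-1)) * (f₀ p * (‖p‖ ^ (1 - 2*r) * ‖p‖ ^ (2*(r-1)) * ‖p‖ ^ ((2:ℝ)))) := by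
          ring
      _ = bound p := by rw [hppow]
  have h_diff : ∀ᵐ p : E₃, ∀ s' ∈ ball s (m/2),
      HasFDerivAt (fun x : Fin 3 → ℝ => f₀ p * w p * (∑ k, x k * p k ^ 2) ^ r) (F' s' p) s' := by
    filter_upwards [ae_ne_zero] with p hp
    intro s' hs'
    have hnp : (0:ℝ) < ‖p‖ := norm_pos_iff.2 hp
    have hQpos : 0 < ∑ k, s' k * p k ^ 2 :=
      Q_pos (fun k => lt_of_lt_of_le hε (hball s' hs' k)) hp
    have hLne : L p s' ≠ 0 := by rw [L_apply]; exact hQpos.ne'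
    have hd := ((L p).hasFDerivAt (x := s')).rpow_const (p := r) (Or.inl hLne)
    have hd2 := hd.const_mul (f₀ p * w p)
    simp only [L_apply] at hd2
    rw [smul_smul] at hd2
    exact hd2
  have hF_meas : ∀ᶠ x in nhds s, AEStronglyMeasurable
      (fun p : E₃ => f₀ p * w p * (∑ k, x k * p k ^ 2) ^ r) volume :=
    Filter.Eventually.of_forall fun x =>
      ((hmeas.mul hwm).mul (meas_rpow (meas_Q x) r)).aestronglyMeasurable
  have hF_int : Integrable (fun p : E₃ => f₀ p * w p * (∑ k, s k * p k ^ 2) ^ r) := by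
    refine (integrableF f₀ hmeas hnn hint w hwm hw0 r hwle s hs).congr
      (Filter.Eventually.of_forall fun p => ?_)
    ring
  have hF'_meas : AEStronglyMeasurable (F' s) volume := by
    refine (StronglyMeasurable.smul (𝕜 := ℝ) ?_ (L_cont.stronglyMeasurable)).aestronglyMeasurable
    exact ((hmeas.mul hwm).mul
      ((meas_rpow (meas_Q s) (r-1)).const_mul r)).stronglyMeasurable
  have hbound_int : Integrable bound :=
    (hint.const_mul (|r| * (m/2) ^ (r-1)))
  have hF'_int : Integrable (F' s) := by
    refine hbound_int.mono' hF'_meas ?_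
    filter_upwards [h_bound] with p hp
    exact hp s (mem_ball_self hε)
  exact ⟨hasFDerivAt_integral_of_dominated_of_fderiv_le (ball_mem_nhds s hε) hF_meas hF_int hF'_meas
    h_bound hbound_int h_diff, hF'_int⟩

end YAux

/-- `∂Y_i/∂s_j < 0` for every `i, j` and every `s` in the open simplex, provided
`f₀ ≥ 0` is not a.e. zero. -/
theorem Y_deriv_neg (f₀ : EuclideanSpace ℝ (Fin 3) → ℝ)
    (hmeas : Measurable f₀) (hnn : ∀ p, 0 ≤ f₀ p)
    (hne : ¬ (∀ᵐ p : EuclideanSpace ℝ (Fin 3), f₀ p = 0))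
    (hint : Integrable (fun p : EuclideanSpace ℝ (Fin 3) => f₀ p * ‖p‖))
    (i j : Fin 3) (s : Fin 3 → ℝ) (hs : ∀ k, 0 < s k) :
    fderiv ℝ (Yfun f₀ i) s (Pi.single j 1) < 0 := by
  have hwleN : ∀ p : EuclideanSpace ℝ (Fin 3), p ≠ 0 →
      (fun p : EuclideanSpace ℝ (Fin 3) => p i ^ 2) p ≤ ‖p‖ ^ (1 - 2*(-(1:ℝ)/2)) := by
    intro p _
    rw [show (1 - 2*(-(1:ℝ)/2)) = (2:ℝ) by norm_num]
    exact YAux.sq_coord_le p i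
  have hwleD : ∀ p : EuclideanSpace ℝ (Fin 3), p ≠ 0 →
      (fun _ : EuclideanSpace ℝ (Fin 3) => (1:ℝ)) p ≤ ‖p‖ ^ (1 - 2*((1:ℝ)/2)) := by
    intro p _
    rw [show (1 - 2*((1:ℝ)/2)) = (0:ℝ) by norm_num, Real.rpow_zero]
  obtain ⟨hN, hNint⟩ := YAux.key f₀ hmeas hnn hint (fun p => p i ^ 2)
    ((YAux.meas_coord i).pow_const 2) (fun p => sq_nonneg _) (-(1:ℝ)/2) (by norm_num) hwleN s hs
  obtain ⟨hD, hDint⟩ := YAux.key f₀ hmeas hnn hint (fun _ => (1:ℝ)) measurable_const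
    (fun _ => zero_le_one) ((1:ℝ)/2) (by norm_num) hwleD s hs
  simp only [mul_one] at hN hNint hD hDint
  -- positivity of the denominator
  have hDintval : Integrable (fun p : EuclideanSpace ℝ (Fin 3) =>
      f₀ p * (∑ k, s k * p k ^ 2) ^ ((1:ℝ)/2)) := by
    refine (YAux.integrableF f₀ hmeas hnn hint (fun _ => (1:ℝ)) measurable_const
      (fun _ => zero_le_one) ((1:ℝ)/2) hwleD s hs).congr
      (Filter.Eventually.of_forall fun p => by simp only []; ring)
  have hDpos : 0 < ∫ p : EuclideanSpace ℝ (Fin 3),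
      f₀ p * (∑ k, s k * p k ^ 2) ^ ((1:ℝ)/2) := by
    refine YAux.int_pos f₀ hnn hne _ (fun p => Real.rpow_nonneg (YAux.Q_nonneg hs p) _)
      (fun p hpk => Real.rpow_pos_of_pos (YAux.Q_pos hs fun h0 => hpk j (by simp [h0])) _) hDintval
  have hDne : (∫ p : EuclideanSpace ℝ (Fin 3),
      f₀ p * (∑ k, s k * p k ^ 2) ^ ((1:ℝ)/2)) ≠ 0 := hDpos.ne'
  -- positivity of the numerator
  have hNintval : Integrable (fun p : EuclideanSpace ℝ (Fin 3) =>
      f₀ p * (p i ^ 2 * (∑ k, s k * p k ^ 2) ^ (-(1:ℝ)/2))) :=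
    YAux.integrableF f₀ hmeas hnn hint (fun p => p i ^ 2) ((YAux.meas_coord i).pow_const 2)
      (fun p => sq_nonneg _) (-(1:ℝ)/2) hwleN s hs
  have hNpos : 0 < ∫ p : EuclideanSpace ℝ (Fin 3),
      f₀ p * (p i ^ 2 * (∑ k, s k * p k ^ 2) ^ (-(1:ℝ)/2)) := by
    refine YAux.int_pos f₀ hnn hne _
      (fun p => mul_nonneg (sq_nonneg _) (Real.rpow_nonneg (YAux.Q_nonneg hs p) _))
      (fun p hpk => mul_pos (lt_of_le_of_ne (sq_nonneg _) (Ne.symm (pow_ne_zero 2 (hpk i))))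
        (Real.rpow_pos_of_pos (YAux.Q_pos hs fun h0 => hpk j (by simp [h0])) _)) hNintval
  have hNassoc : (∫ p : EuclideanSpace ℝ (Fin 3),
      f₀ p * p i ^ 2 * (∑ k, s k * p k ^ 2) ^ (-(1:ℝ)/2))
      = ∫ p : EuclideanSpace ℝ (Fin 3),
      f₀ p * (p i ^ 2 * (∑ k, s k * p k ^ 2) ^ (-(1:ℝ)/2)) := by
    congr 1
    funext p
    ring
  -- A and B integrals
  have hwleA : ∀ p : EuclideanSpace ℝ (Fin 3), p ≠ 0 →
      (fun p : EuclideanSpace ℝ (Fin 3) => p i ^ 2 * p j ^ 2) p ≤ ‖p‖ ^ (1 - 2*(-(1:ℝ)/2 - 1)) := by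
    intro p hp
    rw [show (1 - 2*(-(1:ℝ)/2 - 1)) = (4:ℝ) by norm_num]
    have h4 : ‖p‖ ^ (4:ℝ) = ‖p‖ ^ (2:ℝ) * ‖p‖ ^ (2:ℝ) := by
      rw [← Real.rpow_add (norm_pos_iff.2 hp)]; norm_num
    rw [h4]
    exact mul_le_mul (YAux.sq_coord_le p i) (YAux.sq_coord_le p j) (sq_nonneg _)
      (Real.rpow_nonneg (norm_nonneg p) _)
  have hAint : Integrable (fun p : EuclideanSpace ℝ (Fin 3) =>
      f₀ p * (p i ^ 2 * ((∑ k, s k * p k ^ 2) ^ (-(1:ℝ)/2 - 1) * p j ^ 2))) := by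
    refine (YAux.integrableF f₀ hmeas hnn hint (fun p => p i ^ 2 * p j ^ 2)
      (((YAux.meas_coord i).pow_const 2).mul ((YAux.meas_coord j).pow_const 2))
      (fun p => mul_nonneg (sq_nonneg _) (sq_nonneg _)) (-(1:ℝ)/2 - 1) hwleA s hs).congr
      (Filter.Eventually.of_forall fun p => by simp only []; ring)
  have hApos : 0 < ∫ p : EuclideanSpace ℝ (Fin 3),
      f₀ p * (p i ^ 2 * ((∑ k, s k * p k ^ 2) ^ (-(1:ℝ)/2 - 1) * p j ^ 2)) := by
    refine YAux.int_pos f₀ hnn hne _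
      (fun p => mul_nonneg (sq_nonneg _)
        (mul_nonneg (Real.rpow_nonneg (YAux.Q_nonneg hs p) _) (sq_nonneg _)))
      (fun p hpk => mul_pos (lt_of_le_of_ne (sq_nonneg _) (Ne.symm (pow_ne_zero 2 (hpk i))))
        (mul_pos (Real.rpow_pos_of_pos (YAux.Q_pos hs fun h0 => hpk j (by simp [h0])) _)
          (lt_of_le_of_ne (sq_nonneg _) (Ne.symm (pow_ne_zero 2 (hpk j)))))) hAint
  have hwleB : ∀ p : EuclideanSpace ℝ (Fin 3), p ≠ 0 →
      (fun p : EuclideanSpace ℝ (Fin 3) => p j ^ 2) p ≤ ‖p‖ ^ (1 - 2*((1:ℝ)/2 - 1)) := by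
    intro p _
    rw [show (1 - 2*((1:ℝ)/2 - 1)) = (2:ℝ) by norm_num]
    exact YAux.sq_coord_le p j
  have hBint : Integrable (fun p : EuclideanSpace ℝ (Fin 3) =>
      f₀ p * (p j ^ 2 * (∑ k, s k * p k ^ 2) ^ ((1:ℝ)/2 - 1))) :=
    YAux.integrableF f₀ hmeas hnn hint (fun p => p j ^ 2) ((YAux.meas_coord j).pow_const 2)
      (fun p => sq_nonneg _) ((1:ℝ)/2 - 1) hwleB s hs
  have hBpos : 0 < ∫ p : EuclideanSpace ℝ (Fin 3),
      f₀ p * (p j ^ 2 * (∑ k, s k * p k ^ 2) ^ ((1:ℝ)/2 - 1)) := by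
    refine YAux.int_pos f₀ hnn hne _
      (fun p => mul_nonneg (sq_nonneg _) (Real.rpow_nonneg (YAux.Q_nonneg hs p) _))
      (fun p hpk => mul_pos (lt_of_le_of_ne (sq_nonneg _) (Ne.symm (pow_ne_zero 2 (hpk j))))
        (Real.rpow_pos_of_pos (YAux.Q_pos hs fun h0 => hpk j (by simp [h0])) _)) hBint
  -- the quotient rule
  have hfun : Yfun f₀ i = fun y : Fin 3 → ℝ =>
      (∫ p : EuclideanSpace ℝ (Fin 3), f₀ p * p i ^ 2 * (∑ k, y k * p k ^ 2) ^ (-(1:ℝ)/2)) *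
      ((∫ p : EuclideanSpace ℝ (Fin 3), f₀ p * (∑ k, y k * p k ^ 2) ^ ((1:ℝ)/2))⁻¹) :=
    funext fun y => div_eq_mul_inv _ _
  have hYf : HasFDerivAt (𝕜 := ℝ) (Yfun f₀ i)
      ((∫ p : EuclideanSpace ℝ (Fin 3), f₀ p * p i ^ 2 * (∑ k, s k * p k ^ 2) ^ (-(1:ℝ)/2)) •
        ((-((∫ p : EuclideanSpace ℝ (Fin 3), f₀ p * (∑ k, s k * p k ^ 2) ^ ((1:ℝ)/2)) ^ 2)⁻¹) •
          (∫ p : EuclideanSpace ℝ (Fin 3),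
            (f₀ p * ((1:ℝ)/2 * (∑ k, s k * p k ^ 2) ^ ((1:ℝ)/2 - 1))) • YAux.L p)) +
       (∫ p : EuclideanSpace ℝ (Fin 3), f₀ p * (∑ k, s k * p k ^ 2) ^ ((1:ℝ)/2))⁻¹ •
        (∫ p : EuclideanSpace ℝ (Fin 3),
          (f₀ p * p i ^ 2 * (-(1:ℝ)/2 * (∑ k, s k * p k ^ 2) ^ (-(1:ℝ)/2 - 1))) • YAux.L p)) s := by
    rw [hfun]
    exact hN.mul ((hasDerivAt_inv hDne).comp_hasFDerivAt s hD)
  rw [hYf.fderiv]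
  simp only [ContinuousLinearMap.add_apply, ContinuousLinearMap.smul_apply, smul_eq_mul]
  rw [ContinuousLinearMap.integral_apply hNint, ContinuousLinearMap.integral_apply hDint]
  simp only [ContinuousLinearMap.smul_apply, YAux.L_single, smul_eq_mul]
  have e2 : (∫ x : EuclideanSpace ℝ (Fin 3),
        f₀ x * ((1:ℝ)/2 * (∑ k, s k * x k ^ 2) ^ ((1:ℝ)/2 - 1)) * x j ^ 2)
      = ((1:ℝ)/2) * ∫ p : EuclideanSpace ℝ (Fin 3),
        f₀ p * (p j ^ 2 * (∑ k, s k * p k ^ 2) ^ ((1:ℝ)/2 - 1)) := by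
    rw [← integral_const_mul]
    congr 1
    funext p
    ring
  have e1 : (∫ x : EuclideanSpace ℝ (Fin 3),
        f₀ x * x i ^ 2 * (-(1:ℝ)/2 * (∑ k, s k * x k ^ 2) ^ (-(1:ℝ)/2 - 1)) * x j ^ 2)
      = (-(1:ℝ)/2) * ∫ p : EuclideanSpace ℝ (Fin 3),
        f₀ p * (p i ^ 2 * ((∑ k, s k * p k ^ 2) ^ (-(1:ℝ)/2 - 1) * p j ^ 2)) := by
    rw [← integral_const_mul]
    congr 1
    funext p
    ring
  rw [e1, e2, hNassoc]
  have hD2 : 0 < ((∫ p : EuclideanSpace ℝ (Fin 3),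
      f₀ p * (∑ k, s k * p k ^ 2) ^ ((1:ℝ)/2)) ^ 2)⁻¹ := inv_pos.2 (pow_pos hDpos 2)
  have hDi : 0 < (∫ p : EuclideanSpace ℝ (Fin 3),
      f₀ p * (∑ k, s k * p k ^ 2) ^ ((1:ℝ)/2))⁻¹ := inv_pos.2 hDpos
  nlinarith [mul_pos hNpos (mul_pos hD2 hBpos), mul_pos hDi hApos]
end

section
/- Let λ₀ be the real root of 15λ³ − 45λ² + 142λ − 128 = 0. Then there exist real α, β with α > β²/4 such that the quadratic form q(s̄, Σ) = (λ₀ α + (16/5)β) s̄² + (λ₀ − 2 − (2/3)β) F + (β(λ₀ − 1) + 24/5 − (4/3)α) s̄·Σ vanishes identically, where s̄² = Σ_i s̄_i², F = Σ_i Σ_i², s̄·Σ = Σ_i s̄_i Σ_i; concretely one may take β = 3(λ₀ − 2)/2 and α = −5λ₀β/16. -/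
open Finset

/-- For `λ₀` the real root of `15λ³ − 45λ² + 142λ − 128 = 0` there exist `α, β` with
`α > β²/4`, `β = 3(λ₀−2)/2`, such that the quadratic form `q` vanishes identically. -/
theorem optimal_q_vanishes (lam : ℝ)
    (hroot : 15 * lam ^ 3 - 45 * lam ^ 2 + 142 * lam - 128 = 0) :
    ∃ α β : ℝ, α > β ^ 2 / 4 ∧ β = 3 * (lam - 2) / 2 ∧
      ∀ sb Sg : Fin 3 → ℝ,
        (lam * α + (16 / 5) * β) * (∑ i, sb i ^ 2) +
          (lam - 2 - (2 / 3) * β) * (∑ i, Sg i ^ 2) +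
          (β * (lam - 1) + 24 / 5 - (4 / 3) * α) * (∑ i, sb i * Sg i) = 0 := by
  have hlb : (1 : ℝ) < lam := by nlinarith [sq_nonneg (lam - 1)]
  have hub : lam < 6 / 5 := by nlinarith [sq_nonneg (lam - 6/5), sq_nonneg lam]
  have hne : lam ≠ 0 := by positivity
  refine ⟨-24 * (lam - 2) / (5 * lam), 3 * (lam - 2) / 2, ?_, rfl, ?_⟩
  · rw [gt_iff_lt, div_lt_div_iff₀ (by norm_num) (by positivity)]
    nlinarith [sq_nonneg (lam - 2), mul_pos (sub_pos.mpr hlb) (sub_pos.mpr hub)]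
  · intro sb Sg
    have h1 : lam * (-24 * (lam - 2) / (5 * lam)) + (16 / 5) * (3 * (lam - 2) / 2) = 0 := by
      field_simp
      ring
    have h2 : lam - 2 - (2 / 3) * (3 * (lam - 2) / 2) = 0 := by ring
    have h3 : (3 * (lam - 2) / 2) * (lam - 1) + 24 / 5 - (4 / 3) * (-24 * (lam - 2) / (5 * lam)) = 0 := by
      field_simp
      linear_combination 3 * hroot
    rw [h1, h2, h3]
    ring
end

section
/- Consider the linear system on ℝ⁶ given by Σ_i′ = −Σ_i + 3 s̄_i − (7/5) s̄_i − (4/5)(s̄_j + s̄_k) (for {i,j,k} = {1,2,3}) restricted to the invariant subspace {Σ₁+Σ₂+Σ₃ = 0, s̄₁+s̄₂+s̄₃ = 0}, together with s̄_i′ = −(2/3)Σ_i. Every solution with initial data in this subspace converges to 0 exponentially as τ → ∞. -/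
set_option maxHeartbeats 1000000


open Finset

/-- The linearized diagonal Bianchi I system on the invariant subspace
`{ΣΣᵢ = 0, Σs̄ᵢ = 0}` is exponentially stable. -/
theorem linearized_system_exp_stable (Sg sb : ℝ → Fin 3 → ℝ) (τ₀ : ℝ)
    (hSg : ∀ τ : ℝ, ∀ i : Fin 3, HasDerivAt (fun u => Sg u i)
      (-(Sg τ i) + 3 * sb τ i - (7 / 5) * sb τ i -
        (4 / 5) * ((∑ j, sb τ j) - sb τ i)) τ)
    (hsb : ∀ τ : ℝ, ∀ i : Fin 3, HasDerivAt (fun u => sb u i) (-(2 / 3) * Sg τ i) τ)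
    (hS0 : ∑ i, Sg τ₀ i = 0) (hs0 : ∑ i, sb τ₀ i = 0) :
    ∃ C μ : ℝ, 0 < C ∧ 0 < μ ∧ ∀ τ ≥ τ₀, ∀ i : Fin 3,
      |Sg τ i| ≤ C * Real.exp (-μ * (τ - τ₀)) ∧
      |sb τ i| ≤ C * Real.exp (-μ * (τ - τ₀)) := by
  -- Step 1: derivative of the sum of the Σᵢ
  have hSsum : ∀ τ : ℝ, HasDerivAt (fun u => Sg u 0 + Sg u 1 + Sg u 2)
      (-(Sg τ 0 + Sg τ 1 + Sg τ 2)) τ := by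
    intro τ
    have h := ((hSg τ 0).add (hSg τ 1)).add (hSg τ 2)
    refine h.congr_deriv ?_
    simp only [Fin.sum_univ_three]
    ring
  -- Step 2: the sum of Σᵢ is identically 0
  have hSzero : ∀ τ : ℝ, Sg τ 0 + Sg τ 1 + Sg τ 2 = 0 := by
    have hg : ∀ u : ℝ, HasDerivAt (fun v => Real.exp v * (Sg v 0 + Sg v 1 + Sg v 2)) 0 u := by
      intro u
      have h := (Real.hasDerivAt_exp u).mul (hSsum u)
      refine h.congr_deriv ?_
      ring
    have hconst := is_const_of_deriv_eq_zero
      (fun u => (hg u).differentiableAt) (fun u => (hg u).deriv)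
    intro τ
    have h := hconst τ τ₀
    have h0 : Sg τ₀ 0 + Sg τ₀ 1 + Sg τ₀ 2 = 0 := by
      simpa [Fin.sum_univ_three] using hS0
    rw [h0, mul_zero] at h
    exact (mul_eq_zero.mp h).resolve_left (Real.exp_ne_zero τ)
  -- Step 3: the sum of the s̄ᵢ is identically 0
  have hsbsum : ∀ τ : ℝ, sb τ 0 + sb τ 1 + sb τ 2 = 0 := by
    have hg : ∀ u : ℝ, HasDerivAt (fun v => sb v 0 + sb v 1 + sb v 2) 0 u := by
      intro u
      have h := ((hsb u 0).add (hsb u 1)).add (hsb u 2)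
      refine h.congr_deriv ?_
      have := hSzero u
      linarith
    have hconst := is_const_of_deriv_eq_zero
      (fun u => (hg u).differentiableAt) (fun u => (hg u).deriv)
    intro τ
    have h := hconst τ τ₀
    have h0 : sb τ₀ 0 + sb τ₀ 1 + sb τ₀ 2 = 0 := by
      simpa [Fin.sum_univ_three] using hs0
    rw [h0] at h
    exact h
  -- Step 4: simplified per-component equation Σᵢ' = -Σᵢ + (12/5) s̄ᵢ
  have hx : ∀ τ : ℝ, ∀ i : Fin 3, HasDerivAt (fun u => Sg u i)
      (-(Sg τ i) + (12/5) * sb τ i) τ := by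
    intro τ i
    have h := hSg τ i
    have hs' : (∑ j, sb τ j) = 0 := by
      simpa [Fin.sum_univ_three] using hsbsum τ
    rw [hs'] at h
    convert h using 1
    ring
  -- constants
  obtain ⟨M, hM⟩ : ∃ m : ℝ, m = ∑ i, ((Sg τ₀ i)^2 + (sb τ₀ i)^2) := ⟨_, rfl⟩
  have hMnonneg : 0 ≤ M := hM ▸ Finset.sum_nonneg fun i _ => by positivity
  have hsq10 : Real.sqrt (10 * M) ^ 2 = 10 * M := Real.sq_sqrt (by linarith)
  obtain ⟨C, hC⟩ : ∃ c : ℝ, c = 1 + Real.sqrt (10 * M) := ⟨_, rfl⟩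
  have hCpos : 0 < C := by
    have := Real.sqrt_nonneg (10 * M); rw [hC]; linarith
  have hCsq : 10 * M ≤ C ^ 2 := by
    have := Real.sqrt_nonneg (10 * M)
    rw [hC]; nlinarith [hsq10]
  refine ⟨C, 1/5, hCpos, by norm_num, ?_⟩
  intro τ hτ i
  -- Lyapunov function V and its derivative
  have hVd : ∀ u : ℝ, HasDerivAt
      (fun v => Sg v i * Sg v i - Sg v i * sb v i + (87/20) * (sb v i * sb v i))
      (-(4/3) * (Sg u i * Sg u i) - (12/5) * (sb u i * sb u i)) u := by
    intro u
    have h := (((hx u i).mul (hx u i)).sub ((hx u i).mul (hsb u i))).add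
      (((hsb u i).mul (hsb u i)).const_mul (87/20))
    refine h.congr_deriv ?_
    ring
  -- W = e^{(2/5)(τ-τ₀)} V is nonincreasing
  have hWd : ∀ u : ℝ, HasDerivAt
      (fun v => Real.exp ((2/5) * (v - τ₀)) *
        (Sg v i * Sg v i - Sg v i * sb v i + (87/20) * (sb v i * sb v i)))
      (Real.exp ((2/5) * (u - τ₀)) * ((2/5) *
        (Sg u i * Sg u i - Sg u i * sb u i + (87/20) * (sb u i * sb u i))
        + (-(4/3) * (Sg u i * Sg u i) - (12/5) * (sb u i * sb u i)))) u := by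
    intro u
    have hlin : HasDerivAt (fun v : ℝ => (2/5) * (v - τ₀)) (2/5) u := by
      simpa using ((hasDerivAt_id u).sub_const τ₀).const_mul (2/5 : ℝ)
    have h := hlin.exp.mul (hVd u)
    refine h.congr_deriv ?_
    ring
  have hWanti : Antitone (fun v => Real.exp ((2/5) * (v - τ₀)) *
      (Sg v i * Sg v i - Sg v i * sb v i + (87/20) * (sb v i * sb v i))) := by
    refine antitone_of_deriv_nonpos (fun u => (hWd u).differentiableAt) ?_
    intro u
    rw [(hWd u).deriv]
    have hexp := Real.exp_pos ((2/5) * (u - τ₀))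
    have hquad : (2/5) * (Sg u i * Sg u i - Sg u i * sb u i + (87/20) * (sb u i * sb u i))
        + (-(4/3) * (Sg u i * Sg u i) - (12/5) * (sb u i * sb u i)) ≤ 0 := by
      nlinarith [sq_nonneg (Sg u i + (3/14) * sb u i), sq_nonneg (Sg u i - (3/14) * sb u i),
        sq_nonneg (sb u i)]
    exact mul_nonpos_of_nonneg_of_nonpos hexp.le hquad
  -- Grönwall consequence
  have key : Real.exp ((2/5) * (τ - τ₀)) *
      (Sg τ i * Sg τ i - Sg τ i * sb τ i + (87/20) * (sb τ i * sb τ i)) ≤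
      Sg τ₀ i * Sg τ₀ i - Sg τ₀ i * sb τ₀ i + (87/20) * (sb τ₀ i * sb τ₀ i) := by
    have h := hWanti hτ
    simpa using h
  -- initial value bound
  have hstart : (Sg τ₀ i)^2 + (sb τ₀ i)^2 ≤ M :=
    hM ▸ Finset.single_le_sum (f := fun j => (Sg τ₀ j)^2 + (sb τ₀ j)^2)
      (fun j _ => by positivity) (mem_univ i)
  have hV0 : Sg τ₀ i * Sg τ₀ i - Sg τ₀ i * sb τ₀ i + (87/20) * (sb τ₀ i * sb τ₀ i)
      ≤ 5 * M := by
    nlinarith [sq_nonneg (Sg τ₀ i + sb τ₀ i), sq_nonneg (Sg τ₀ i - sb τ₀ i)]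
  -- lower bound on V at time τ
  have hlow : (1/2) * (Sg τ i * Sg τ i + sb τ i * sb τ i) ≤
      Sg τ i * Sg τ i - Sg τ i * sb τ i + (87/20) * (sb τ i * sb τ i) := by
    nlinarith [sq_nonneg (Sg τ i - sb τ i), sq_nonneg (sb τ i)]
  have hEpos := Real.exp_pos ((2/5) * (τ - τ₀))
  have hepos := Real.exp_pos (-(1/5) * (τ - τ₀))
  have hE : Real.exp (-(1/5) * (τ - τ₀)) * Real.exp (-(1/5) * (τ - τ₀))
      * Real.exp ((2/5) * (τ - τ₀)) = 1 := by
    rw [← Real.exp_add, ← Real.exp_add]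
    have : (-(1/5) * (τ - τ₀) + -(1/5) * (τ - τ₀) + (2/5) * (τ - τ₀)) = 0 := by ring
    rw [this, Real.exp_zero]
  obtain ⟨e, he⟩ : ∃ x : ℝ, x = Real.exp (-(1/5) * (τ - τ₀)) := ⟨_, rfl⟩
  rw [← he] at hE hepos ⊢
  have hrpos : 0 < C * e := mul_pos hCpos hepos
  have hCe : (C * e) * (C * e) * Real.exp ((2/5) * (τ - τ₀)) = C ^ 2 := by
    have : (C * e) * (C * e) * Real.exp ((2/5) * (τ - τ₀))
        = C ^ 2 * (e * e * Real.exp ((2/5) * (τ - τ₀))) := by ring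
    rw [this, hE, mul_one]
  -- combine: both squares are ≤ (C e)²
  have hmul := mul_le_mul_of_nonneg_left hlow hEpos.le
  have hxsq : Sg τ i * Sg τ i ≤ (C * e) * (C * e) := by
    have h1 : Sg τ i * Sg τ i * Real.exp ((2/5) * (τ - τ₀))
        ≤ (C * e) * (C * e) * Real.exp ((2/5) * (τ - τ₀)) := by
      rw [hCe]
      linarith [hmul, key, hV0, hCsq,
        mul_nonneg (mul_self_nonneg (sb τ i)) hEpos.le]
    exact (mul_le_mul_iff_of_pos_right hEpos).mp h1
  have hysq : sb τ i * sb τ i ≤ (C * e) * (C * e) := by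
    have h1 : sb τ i * sb τ i * Real.exp ((2/5) * (τ - τ₀))
        ≤ (C * e) * (C * e) * Real.exp ((2/5) * (τ - τ₀)) := by
      rw [hCe]
      linarith [hmul, key, hV0, hCsq,
        mul_nonneg (mul_self_nonneg (Sg τ i)) hEpos.le]
    exact (mul_le_mul_iff_of_pos_right hEpos).mp h1
  constructor
  · refine abs_le.mpr ⟨?_, ?_⟩ <;>
      nlinarith [hxsq, hrpos, sq_nonneg (Sg τ i + C * e), sq_nonneg (Sg τ i - C * e)]
  · refine abs_le.mpr ⟨?_, ?_⟩ <;>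
      nlinarith [hysq, hrpos, sq_nonneg (sb τ i + C * e), sq_nonneg (sb τ i - C * e)]
end
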